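/- Let A be a domain, C a subring of A with a ∈ C a nonzero element satisfying aC = Ca (a is normal in C). Let D = { d ∈ A : d a^k ∈ aC for some natural number k }. Then D is a subring of A. Consequently, if A is generated as a ring by elements of D, then for every r ∈ A there exists k with r a^k ∈ aC. -/
import Mathlib

section aux
variable {A : Type*} [Ring A] (C : Subring A) (a : A)

/-- move an element of `C` from the left of `a` to the right -/
lemma stmt10_swap (hnorm : {x | ∃ c ∈ C, x = a * c} = {x | ∃ c ∈ C, x = c * a}) : ∀ c ∈ C, ∃ c' ∈ C, c * a = a * c' := by
  intro c hc
  have : c * a ∈ {x | ∃ c ∈ C, x = a * c} := by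
    rw [hnorm]; exact ⟨c, hc, rfl⟩
  obtain ⟨c', hc', h⟩ := this
  exact ⟨c', hc', h⟩

lemma stmt10_swap_pow (hnorm : {x | ∃ c ∈ C, x = a * c} = {x | ∃ c ∈ C, x = c * a}) : ∀ (k : ℕ), ∀ c ∈ C, ∃ c' ∈ C, c * a ^ k = a ^ k * c' := by
  intro k
  induction k with
  | zero => intro c hc; exact ⟨c, hc, by simp⟩
  | succ n ih =>
    intro c hc
    obtain ⟨c', hc', h⟩ := stmt10_swap C a hnorm c hc
    obtain ⟨c'', hc'', h2⟩ := ih c' hc'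
    refine ⟨c'', hc'', ?_⟩
    rw [pow_succ', ← mul_assoc, h, mul_assoc, h2, ← mul_assoc]

/-- pad the exponent by one -/
lemma stmt10_pad (ha : a ∈ C) (hnorm : {x | ∃ c ∈ C, x = a * c} = {x | ∃ c ∈ C, x = c * a}) {d : A} {k : ℕ} {c : A} (hc : c ∈ C) (h : d * a ^ k = a * c) :
    ∃ c' ∈ C, d * a ^ (k + 1) = a * c' := by
  obtain ⟨c', hc', hs⟩ := stmt10_swap C a hnorm c hc
  refine ⟨a * c', mul_mem ha hc', ?_⟩
  rw [pow_succ, ← mul_assoc, h, mul_assoc, hs, ← mul_assoc]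

lemma stmt10_pad' (ha : a ∈ C) (hnorm : {x | ∃ c ∈ C, x = a * c} = {x | ∃ c ∈ C, x = c * a}) {d : A} {k : ℕ} {c : A} (hc : c ∈ C) (h : d * a ^ k = a * c) :
    ∀ n, ∃ c' ∈ C, d * a ^ (k + n) = a * c' := by
  intro n
  induction n with
  | zero => exact ⟨c, hc, h⟩
  | succ m ih =>
    obtain ⟨c', hc', h'⟩ := ih
    obtain ⟨c'', hc'', h''⟩ := stmt10_pad C a ha hnorm hc' h'
    exact ⟨c'', hc'', by rw [← Nat.add_assoc]; exact h''⟩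

end aux

/-- If `a` is a nonzero element of a subring `C` of a domain `A` with `aC = Ca`, then
`D = {d ∈ A : d aᵏ ∈ aC for some k}` is a subring of `A`; consequently if `A` is generated
as a ring by elements of `D` then `a` is right `C`-seminormal in `A`. -/
theorem stmt10 {A : Type*} [Ring A] [IsDomain A] (C : Subring A) (a : A)
    (ha : a ∈ C) (ha0 : a ≠ 0)
    (hnorm : {x | ∃ c ∈ C, x = a * c} = {x | ∃ c ∈ C, x = c * a}) :
    (∃ D : Subring A, (D : Set A) = {d | ∃ k : ℕ, ∃ c ∈ C, d * a ^ k = a * c}) ∧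
    (Subring.closure {d | ∃ k : ℕ, ∃ c ∈ C, d * a ^ k = a * c} = ⊤ →
      ∀ r : A, ∃ k : ℕ, ∃ c ∈ C, r * a ^ k = a * c) := by
  set S : Set A := {d | ∃ k : ℕ, ∃ c ∈ C, d * a ^ k = a * c} with hS
  have hone : (1 : A) ∈ S := ⟨1, 1, one_mem C, by simp⟩
  have hzero : (0 : A) ∈ S := ⟨0, 0, zero_mem C, by simp⟩
  have hadd : ∀ x y : A, x ∈ S → y ∈ S → x + y ∈ S := by
    rintro x y ⟨k, c, hc, h⟩ ⟨m, c', hc', h'⟩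
    obtain ⟨c₁, hc₁, h₁⟩ := stmt10_pad' C a ha hnorm hc h m
    obtain ⟨c₂, hc₂, h₂⟩ := stmt10_pad' C a ha hnorm hc' h' k
    refine ⟨k + m, c₁ + c₂, add_mem hc₁ hc₂, ?_⟩
    rw [add_mul, h₁, mul_add]
    rw [Nat.add_comm m k] at h₂
    rw [h₂]
  have hneg : ∀ x : A, x ∈ S → -x ∈ S := by
    rintro x ⟨k, c, hc, h⟩
    exact ⟨k, -c, neg_mem hc, by rw [neg_mul, h, mul_neg]⟩
  have hmul : ∀ x y : A, x ∈ S → y ∈ S → x * y ∈ S := by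
    rintro x y ⟨k, c, hc, h⟩ ⟨m, c', hc', h'⟩
    obtain ⟨c'', hc'', h''⟩ := stmt10_swap_pow C a hnorm k c' hc'
    obtain ⟨c₁, hc₁, h₁⟩ := stmt10_pad C a ha hnorm hc h
    refine ⟨m + k, c₁ * c'', mul_mem hc₁ hc'', ?_⟩
    calc x * y * a ^ (m + k) = x * (y * a ^ m) * a ^ k := by
          rw [pow_add, mul_assoc, mul_assoc, mul_assoc]
      _ = x * (a * c') * a ^ k := by rw [h']
      _ = x * a * (c' * a ^ k) := by rw [mul_assoc, mul_assoc, mul_assoc]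
      _ = x * a ^ (k + 1) * c'' := by
          rw [h'', pow_succ', ← mul_assoc, ← mul_assoc, mul_assoc (x*a)]
      _ = a * c₁ * c'' := by rw [h₁]
      _ = a * (c₁ * c'') := by rw [mul_assoc]
  obtain ⟨D, hDcar⟩ : ∃ D : Subring A, (D : Set A) = S :=
    ⟨⟨⟨⟨⟨S, fun {x y} => hmul x y⟩, hone⟩, fun {x y} => hadd x y, hzero⟩,
      fun {x} => hneg x⟩, rfl⟩
  refine ⟨⟨D, hDcar⟩, ?_⟩
  intro hcl r
  have hle : Subring.closure S ≤ D := Subring.closure_le.2 (by rw [hDcar])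
  rw [hcl] at hle
  have hr : r ∈ (D : Set A) := hle (Subring.mem_top r)
  rw [hDcar] at hr
  exact hr
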